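/- Under the assumptions that ∇ω is Q-Lipschitz, F is ν-Hölder continuous with constant L, and X is bounded with diameter bound ‖x−x′‖ ≤ 2Ω for all x,x′ ∈ X, the gap function at x⁺ = P_x(γF(x)) satisfies g(x⁺) := max_{z∈X}⟨F(x⁺), x⁺−z⟩ ≤ 2Ω · (Lγ^ν ‖R_γ(x)‖^ν + Q‖R_γ(x)‖). -/

import Mathlib

open scoped InnerProductSpace

/-- The Bregman distance `V(x,z) = ω(z) − ω(x) − ⟨∇ω(x), z−x⟩`. -/
noncomputable def bregman {n : ℕ} (ω : EuclideanSpace ℝ (Fin n) → ℝ)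
    (gω : EuclideanSpace ℝ (Fin n) → EuclideanSpace ℝ (Fin n))
    (x z : EuclideanSpace ℝ (Fin n)) : ℝ :=
  ω z - ω x - ⟪gω x, z - x⟫_ℝ

variable {n : ℕ}

section nrmfacts
variable (nrm : EuclideanSpace ℝ (Fin n) → ℝ)
  (hn0 : ∀ v, nrm v = 0 ↔ v = 0)
  (hns : ∀ (c : ℝ) v, nrm (c • v) = |c| * nrm v)
  (hnt : ∀ v w, nrm (v + w) ≤ nrm v + nrm w)

include hn0 hns hnt

theorem nrm_nonneg : ∀ v, 0 ≤ nrm v := by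
  intro v
  have h0 : nrm 0 = 0 := (hn0 0).mpr rfl
  have := hnt v (-v)
  have hneg : nrm (-v) = nrm v := by
    have := hns (-1) v; simpa using this
  rw [add_neg_cancel, h0, hneg] at this
  linarith

theorem nrm_le_const_mul_norm :
    ∃ C : ℝ, 0 < C ∧ ∀ v, nrm v ≤ C * ‖v‖ := by
  classical
  set C : ℝ := (∑ i : Fin n, nrm (EuclideanSpace.single i 1)) + 1 with hC
  have hCpos : 0 < C := by
    have : 0 ≤ ∑ i : Fin n, nrm (EuclideanSpace.single i 1) :=
      Finset.sum_nonneg fun i _ => nrm_nonneg nrm hn0 hns hnt _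
    simp only [hC]; linarith
  refine ⟨C, hCpos, fun v => ?_⟩
  have hdecomp : v = ∑ i : Fin n, (v i) • EuclideanSpace.single i (1:ℝ) := by
    ext j
    rw [WithLp.ofLp_sum, Finset.sum_apply]
    simp [PiLp.smul_apply, EuclideanSpace.single_apply, mul_comm]
  have hsum : nrm (∑ i : Fin n, (v i) • EuclideanSpace.single i (1:ℝ)) ≤
      ∑ i : Fin n, nrm ((v i) • EuclideanSpace.single i (1:ℝ)) :=
    Finset.le_sum_of_subadditive nrm ((hn0 0).mpr rfl).le hnt _ _
  have hcoord : ∀ i : Fin n, |v i| ≤ ‖v‖ := by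
    intro i
    have h1 : (v i)^2 ≤ ∑ j : Fin n, (v j)^2 := by
      exact Finset.single_le_sum (f := fun j => (v j)^2) (fun j _ => sq_nonneg _) (Finset.mem_univ i)
    calc |v i| = Real.sqrt ((v i)^2) := (Real.sqrt_sq_eq_abs _).symm
      _ ≤ Real.sqrt (∑ j : Fin n, (v j)^2) := Real.sqrt_le_sqrt h1
      _ = ‖v‖ := by
          rw [EuclideanSpace.norm_eq]
          congr 1
          exact Finset.sum_congr rfl fun j _ => by rw [Real.norm_eq_abs, sq_abs]
  calc nrm v ≤ ∑ i : Fin n, nrm ((v i) • EuclideanSpace.single i (1:ℝ)) := by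
        conv_lhs => rw [hdecomp]
        exact hsum
    _ ≤ ∑ i : Fin n, ‖v‖ * nrm (EuclideanSpace.single i (1:ℝ)) := by
        refine Finset.sum_le_sum fun i _ => ?_
        rw [hns]
        exact mul_le_mul_of_nonneg_right (hcoord i) (nrm_nonneg nrm hn0 hns hnt _)
    _ = (∑ i : Fin n, nrm (EuclideanSpace.single i (1:ℝ))) * ‖v‖ := by
        rw [← Finset.mul_sum, mul_comm]
    _ ≤ C * ‖v‖ := by
        have := norm_nonneg v
        simp only [hC]; nlinarith

theorem nrm_continuous : Continuous nrm := by
  obtain ⟨C, hCpos, hCb⟩ := nrm_le_const_mul_norm nrm hn0 hns hnt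
  have hlip : LipschitzWith (Real.toNNReal C) nrm := by
    apply LipschitzWith.of_dist_le_mul
    intro a b
    rw [Real.dist_eq, dist_eq_norm]
    have habs : |nrm a - nrm b| ≤ nrm (a - b) := by
      have hneg : nrm (b - a) = nrm (a - b) := by
        have := hns (-1) (a - b); simpa [neg_sub] using this
      rw [abs_sub_le_iff]
      constructor
      · have := hnt (a - b) b; simpa using this
      · have := hnt (b - a) a; rw [hneg] at this; simpa using this
    calc |nrm a - nrm b| ≤ nrm (a - b) := habs
      _ ≤ C * ‖a - b‖ := hCb _
      _ = (Real.toNNReal C : ℝ) * ‖a - b‖ := by rw [Real.coe_toNNReal _ hCpos.le]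
  exact hlip.continuous

theorem const_mul_norm_le_nrm :
    ∃ c : ℝ, 0 < c ∧ ∀ v, c * ‖v‖ ≤ nrm v := by
  rcases eq_or_ne n 0 with hn | hn
  · subst hn
    refine ⟨1, one_pos, fun v => ?_⟩
    have : v = 0 := Subsingleton.elim v 0
    subst this
    simp [(hn0 0).mpr rfl]
  · haveI : Nontrivial (EuclideanSpace ℝ (Fin n)) := by
      have : 0 < n := Nat.pos_of_ne_zero hn
      exact ⟨EuclideanSpace.single ⟨0, this⟩ 1, 0, by
        intro h
        have := congrArg (fun w : EuclideanSpace ℝ (Fin n) => w ⟨0, this⟩) h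
        simp [EuclideanSpace.single_apply] at this⟩
    have hsne : (Metric.sphere (0 : EuclideanSpace ℝ (Fin n)) 1).Nonempty := by
      obtain ⟨w, hw⟩ := exists_norm_eq (EuclideanSpace ℝ (Fin n)) (zero_le_one (α := ℝ))
      exact ⟨w, by simpa [Metric.mem_sphere, dist_zero_right] using hw⟩
    obtain ⟨v0, hv0S, hv0min⟩ := (isCompact_sphere (0 : EuclideanSpace ℝ (Fin n)) 1).exists_isMinOn
      hsne (nrm_continuous nrm hn0 hns hnt).continuousOn
    have hv0norm : ‖v0‖ = 1 := by simpa [Metric.mem_sphere, dist_zero_right] using hv0S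
    have hv0ne : v0 ≠ 0 := by intro h; rw [h] at hv0norm; simp at hv0norm
    have hcpos : 0 < nrm v0 :=
      lt_of_le_of_ne (nrm_nonneg nrm hn0 hns hnt v0) (fun h => hv0ne ((hn0 v0).mp h.symm))
    refine ⟨nrm v0, hcpos, fun v => ?_⟩
    rcases eq_or_ne v 0 with rfl | hv
    · simp [(hn0 0).mpr rfl]
    · have hvn : 0 < ‖v‖ := norm_pos_iff.mpr hv
      set w := ‖v‖⁻¹ • v with hw
      have hwS : w ∈ Metric.sphere (0 : EuclideanSpace ℝ (Fin n)) 1 := by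
        simp [hw, Metric.mem_sphere, dist_zero_right, norm_smul, abs_inv,
          abs_of_pos hvn, inv_mul_cancel₀ hvn.ne']
      have hmin : nrm v0 ≤ nrm w := hv0min hwS
      have hnw : nrm w = ‖v‖⁻¹ * nrm v := by
        rw [hw, hns, abs_of_pos (inv_pos.mpr hvn)]
      rw [hnw] at hmin
      have h2 : nrm v0 * ‖v‖ ≤ ‖v‖⁻¹ * nrm v * ‖v‖ :=
        mul_le_mul_of_nonneg_right hmin hvn.le
      calc nrm v0 * ‖v‖ ≤ ‖v‖⁻¹ * nrm v * ‖v‖ := h2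
        _ = nrm v := by field_simp

end nrmfacts
theorem pairing_le {n : ℕ} (nrm dnrm : EuclideanSpace ℝ (Fin n) → ℝ)
    (hn0 : ∀ v, nrm v = 0 ↔ v = 0)
    (hns : ∀ (c : ℝ) v, nrm (c • v) = |c| * nrm v)
    (hnt : ∀ v w, nrm (v + w) ≤ nrm v + nrm w)
    (hdual : ∀ φ, dnrm φ = sSup ((fun v => ⟪φ, v⟫_ℝ) '' {v | nrm v ≤ 1})) :
    ∀ φ v, ⟪φ, v⟫_ℝ ≤ dnrm φ * nrm v := by
  obtain ⟨c, hc, hcb⟩ := const_mul_norm_le_nrm nrm hn0 hns hnt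
  intro φ v
  have hbdd : BddAbove ((fun v => ⟪φ, v⟫_ℝ) '' {v | nrm v ≤ 1}) := by
    refine ⟨‖φ‖ * c⁻¹, ?_⟩
    rintro _ ⟨w, hw, rfl⟩
    have h1 : c * ‖w‖ ≤ 1 := le_trans (hcb w) hw
    have h2 : ‖w‖ ≤ c⁻¹ := by
      rw [inv_eq_one_div, le_div_iff₀ hc]
      nlinarith
    calc ⟪φ, w⟫_ℝ ≤ ‖φ‖ * ‖w‖ := real_inner_le_norm φ w
      _ ≤ ‖φ‖ * c⁻¹ := mul_le_mul_of_nonneg_left h2 (norm_nonneg φ)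
  have hnn := nrm_nonneg nrm hn0 hns hnt v
  rcases eq_or_lt_of_le hnn with heq | hpos
  · have hv0 : v = 0 := (hn0 v).mp heq.symm
    rw [hv0, inner_zero_right, (show nrm (0 : EuclideanSpace ℝ (Fin n)) = 0 from (hn0 0).mpr rfl),
      mul_zero]
  · have hwmem : nrm ((nrm v)⁻¹ • v) ≤ 1 := by
      rw [hns, abs_of_pos (inv_pos.mpr hpos), inv_mul_cancel₀ hpos.ne']
    have hle : ⟪φ, (nrm v)⁻¹ • v⟫_ℝ ≤ dnrm φ := by
      rw [hdual]; exact le_csSup hbdd ⟨_, hwmem, rfl⟩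
    rw [real_inner_smul_right] at hle
    have := mul_le_mul_of_nonneg_left hle hpos.le
    rw [← mul_assoc, mul_inv_cancel₀ hpos.ne', one_mul] at this
    linarith [this, mul_comm (nrm v) (dnrm φ)]

theorem stmt9 {n : ℕ} (X Xo : Set (EuclideanSpace ℝ (Fin n)))
    (hXne : X.Nonempty) (hXcp : IsCompact X) (hXcv : Convex ℝ X) (hXoX : Xo ⊆ X)
    (nrm dnrm : EuclideanSpace ℝ (Fin n) → ℝ)
    (hn0 : ∀ v, nrm v = 0 ↔ v = 0)
    (hns : ∀ (c : ℝ) v, nrm (c • v) = |c| * nrm v)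
    (hnt : ∀ v w, nrm (v + w) ≤ nrm v + nrm w)
    (hdual : ∀ φ, dnrm φ = sSup ((fun v => ⟪φ, v⟫_ℝ) '' {v | nrm v ≤ 1}))
    (F : EuclideanSpace ℝ (Fin n) → EuclideanSpace ℝ (Fin n))
    (L : ℝ) (hL : 0 < L) (ν : ℝ) (hν0 : 0 < ν) (hν1 : ν ≤ 1)
    (hF : ∀ x ∈ X, ∀ y ∈ X, dnrm (F x - F y) ≤ L * (nrm (x - y)) ^ ν)
    (α : ℝ) (hα : 0 < α) (Q : ℝ) (hQ : 0 < Q)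
    (ω : EuclideanSpace ℝ (Fin n) → ℝ)
    (gω : EuclideanSpace ℝ (Fin n) → EuclideanSpace ℝ (Fin n))
    (hωcv : ConvexOn ℝ X ω)
    (hgrad : ∀ y ∈ Xo, HasGradientAt ω (gω y) y)
    (hsc : ∀ y ∈ Xo, ∀ z ∈ X, α / 2 * (nrm (y - z)) ^ 2 ≤ bregman ω gω y z)
    (hQlip : ∀ x ∈ X, ∀ z ∈ X, dnrm (gω x - gω z) ≤ Q * nrm (x - z))
    (Ω : ℝ) (hΩ : ∀ x ∈ X, ∀ x' ∈ X, nrm (x - x') ≤ 2 * Ω)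
    (x : EuclideanSpace ℝ (Fin n)) (hx : x ∈ X) (hxo : x ∈ Xo)
    (γ : ℝ) (hγ : 0 < γ)
    (xp : EuclideanSpace ℝ (Fin n)) (hxpX : xp ∈ X) (hxpo : xp ∈ Xo)
    (hxp : IsMinOn (fun z => ⟪γ • F x, z⟫_ℝ + bregman ω gω x z) X xp) :
    ∀ z ∈ X,
      ⟪F xp, xp - z⟫_ℝ ≤
        2 * Ω * (L * γ ^ ν * (nrm (γ⁻¹ • (x - xp))) ^ ν +
          Q * nrm (γ⁻¹ • (x - xp))) := by
  intro z hz
  have pairing := pairing_le nrm dnrm hn0 hns hnt hdual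
  -- the objective and its derivative
  have h1 : HasFDerivAt (fun w : EuclideanSpace ℝ (Fin n) => ⟪γ • F x, w⟫_ℝ)
      (InnerProductSpace.toDual ℝ (EuclideanSpace ℝ (Fin n)) (γ • F x)) xp :=
    (InnerProductSpace.toDual ℝ (EuclideanSpace ℝ (Fin n)) (γ • F x)).hasFDerivAt
  have h2 : HasFDerivAt ω (InnerProductSpace.toDual ℝ (EuclideanSpace ℝ (Fin n)) (gω xp)) xp :=
    (hgrad xp hxpo).hasFDerivAt
  have h4 : HasFDerivAt (fun w : EuclideanSpace ℝ (Fin n) => ⟪gω x, w⟫_ℝ)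
      (InnerProductSpace.toDual ℝ (EuclideanSpace ℝ (Fin n)) (gω x)) xp :=
    (InnerProductSpace.toDual ℝ (EuclideanSpace ℝ (Fin n)) (gω x)).hasFDerivAt
  have hobj_eq : (fun w : EuclideanSpace ℝ (Fin n) => ⟪γ • F x, w⟫_ℝ + bregman ω gω x w) =
      fun w : EuclideanSpace ℝ (Fin n) => (⟪γ • F x, w⟫_ℝ + ω w) -
        ((ω x + ⟪gω x, w⟫_ℝ) - ⟪gω x, x⟫_ℝ) := by
    funext w
    simp only [bregman, inner_sub_right]
    ring
  have hD : HasFDerivAt (fun w : EuclideanSpace ℝ (Fin n) => ⟪γ • F x, w⟫_ℝ + bregman ω gω x w)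
      ((InnerProductSpace.toDual ℝ (EuclideanSpace ℝ (Fin n)) (γ • F x) + InnerProductSpace.toDual ℝ (EuclideanSpace ℝ (Fin n)) (gω xp)) -
        ((0 + InnerProductSpace.toDual ℝ (EuclideanSpace ℝ (Fin n)) (gω x)) - 0)) xp := by
    rw [hobj_eq]
    exact (h1.add h2).sub (((hasFDerivAt_const (ω x) xp).add h4).sub (hasFDerivAt_const _ xp))
  have hlocal : IsLocalMinOn (fun w : EuclideanSpace ℝ (Fin n) => ⟪γ • F x, w⟫_ℝ + bregman ω gω x w) X xp :=
    Filter.eventually_of_mem self_mem_nhdsWithin fun y hy => hxp hy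
  have htc : z - xp ∈ posTangentConeAt X xp :=
    sub_mem_posTangentConeAt_of_segment_subset (hXcv.segment_subset hxpX hz)
  have hVI := hlocal.hasFDerivWithinAt_nonneg hD.hasFDerivWithinAt htc
  simp only [ContinuousLinearMap.coe_sub', ContinuousLinearMap.coe_add', Pi.sub_apply,
    Pi.add_apply, ContinuousLinearMap.zero_apply, InnerProductSpace.toDual_apply_apply,
    zero_add, sub_zero] at hVI
  -- hVI : 0 ≤ ⟪γ • F x, z - xp⟫ + ⟪gω xp, z - xp⟫ - ⟪gω x, z - xp⟫
  set N := nrm (x - xp) with hNdef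
  have hN0 : 0 ≤ N := nrm_nonneg nrm hn0 hns hnt _
  have hflip : nrm (xp - x) = N := by
    rw [hNdef, show xp - x = (-1 : ℝ) • (x - xp) by simp [neg_sub], hns]
    simp
  have hr : nrm (γ⁻¹ • (x - xp)) = γ⁻¹ * N := by
    rw [hns, abs_of_pos (inv_pos.mpr hγ)]
  have hΩ0 : 0 ≤ Ω := by
    have := hΩ x hx x hx
    have h0 : nrm (x - x) = 0 := by rw [sub_self]; exact (hn0 0).mpr rfl
    linarith [h0 ▸ this]
  have hzxp : nrm (z - xp) ≤ 2 * Ω := hΩ z hz xp hxpX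
  have hxpz : nrm (xp - z) ≤ 2 * Ω := hΩ xp hxpX z hz
  -- bound A
  have hA : ⟪F xp - F x, xp - z⟫_ℝ ≤ (L * N ^ ν) * (2 * Ω) := by
    calc ⟪F xp - F x, xp - z⟫_ℝ ≤ dnrm (F xp - F x) * nrm (xp - z) := pairing _ _
      _ ≤ (L * N ^ ν) * (2 * Ω) := by
        have hd := hF xp hxpX x hx
        rw [hflip] at hd
        exact mul_le_mul hd hxpz (nrm_nonneg nrm hn0 hns hnt _)
          (by positivity)
  -- bound B
  have hB : ⟪gω xp - gω x, z - xp⟫_ℝ ≤ (Q * N) * (2 * Ω) := by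
    calc ⟪gω xp - gω x, z - xp⟫_ℝ ≤ dnrm (gω xp - gω x) * nrm (z - xp) := pairing _ _
      _ ≤ (Q * N) * (2 * Ω) := by
        have hd := hQlip xp hxpX x hx
        rw [hflip] at hd
        exact mul_le_mul hd hzxp (nrm_nonneg nrm hn0 hns hnt _) (by positivity)
  -- from hVI : γ * ⟪F x, xp - z⟫ ≤ ⟪gω xp - gω x, z - xp⟫
  have hVI' : γ * ⟪F x, xp - z⟫_ℝ ≤ ⟪gω xp - gω x, z - xp⟫_ℝ := by
    have e1 : ⟪γ • F x, z - xp⟫_ℝ = γ * ⟪F x, z - xp⟫_ℝ := real_inner_smul_left _ _ _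
    have e2 : ⟪F x, xp - z⟫_ℝ = -⟪F x, z - xp⟫_ℝ := by
      rw [← inner_neg_right]; rw [neg_sub]
    have e3 : ⟪gω xp - gω x, z - xp⟫_ℝ = ⟪gω xp, z - xp⟫_ℝ - ⟪gω x, z - xp⟫_ℝ :=
      inner_sub_left _ _ _
    rw [e1] at hVI
    rw [e2, e3]
    linarith
  have hFx : ⟪F x, xp - z⟫_ℝ ≤ (Q * N) * (2 * Ω) / γ := by
    rw [le_div_iff₀ hγ]
    calc ⟪F x, xp - z⟫_ℝ * γ = γ * ⟪F x, xp - z⟫_ℝ := by ring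
      _ ≤ ⟪gω xp - gω x, z - xp⟫_ℝ := hVI'
      _ ≤ (Q * N) * (2 * Ω) := hB
  have hsplit : ⟪F xp, xp - z⟫_ℝ = ⟪F xp - F x, xp - z⟫_ℝ + ⟪F x, xp - z⟫_ℝ := by
    rw [inner_sub_left]; ring
  have hpow : γ ^ ν * (γ⁻¹) ^ ν = 1 := by
    rw [← Real.mul_rpow hγ.le (inv_nonneg.mpr hγ.le), mul_inv_cancel₀ hγ.ne', Real.one_rpow]
  have hRHS : 2 * Ω * (L * γ ^ ν * (nrm (γ⁻¹ • (x - xp))) ^ ν + Q * nrm (γ⁻¹ • (x - xp)))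
      = (L * N ^ ν) * (2 * Ω) + (Q * N) * (2 * Ω) / γ := by
    rw [hr, Real.mul_rpow (inv_nonneg.mpr hγ.le) hN0,
      show L * γ ^ ν * (γ⁻¹ ^ ν * N ^ ν) = L * (γ ^ ν * γ⁻¹ ^ ν) * N ^ ν by ring, hpow,
      div_eq_mul_inv]
    ring
  rw [hRHS, hsplit]
  linarith
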